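/- Weak duality holds between M-CLP and M-CLP*: for every feasible solution U of M-CLP and every feasible solution P of M-CLP*, z(U) ≤ z*(P). -/

import Mathlib

open MeasureTheory Filter

/-- A feasible solution of M-CLP. -/
def PrimalFeasible {K J : ℕ} (A : Matrix (Fin K) (Fin J) ℝ) (b β lam : Fin K → ℝ) (T : ℝ)
    (U : ℝ → Fin J → ℝ) : Prop :=
  (∀ j, MonotoneOn (fun t => U t j) (Set.Icc 0 T)) ∧
  (∀ j, ∀ t ∈ Set.Ico (0:ℝ) T,
    Tendsto (fun s => U s j) (nhdsWithin t (Set.Ioi t)) (nhds (U t j))) ∧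
  (∀ j, 0 ≤ U 0 j) ∧
  (∀ t ∈ Set.Ico (0:ℝ) T, ∀ k, A.mulVec (U t) k ≤ β k + t * b k) ∧
  (∀ k, A.mulVec (U T) k ≤ β k + T * b k + lam k)

/-- A feasible solution of M-CLP*. -/
def DualFeasible {K J : ℕ} (A : Matrix (Fin K) (Fin J) ℝ) (c γ μ : Fin J → ℝ) (T : ℝ)
    (P : ℝ → Fin K → ℝ) : Prop :=
  (∀ k, MonotoneOn (fun s => P s k) (Set.Icc 0 T)) ∧
  (∀ k, ∀ s ∈ Set.Ico (0:ℝ) T,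
    Tendsto (fun r => P r k) (nhdsWithin s (Set.Ioi s)) (nhds (P s k))) ∧
  (∀ k, 0 ≤ P 0 k) ∧
  (∀ s ∈ Set.Ico (0:ℝ) T, ∀ j, γ j + s * c j ≤ A.transpose.mulVec (P s) j) ∧
  (∀ j, γ j + T * c j + μ j ≤ A.transpose.mulVec (P T) j)

/-- `ν i` is the Lebesgue–Stieltjes measure on `[0,T]` of the (right-continuous,
nondecreasing) function `F · i`, with the convention `F (0-) i = 0`. -/
def LSFamily {I : Type*} (T : ℝ) (F : ℝ → I → ℝ) (ν : I → Measure ℝ) : Prop :=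
  ∀ i, ν i (Set.Icc 0 T)ᶜ = 0 ∧
    ∀ x ∈ Set.Icc (0:ℝ) T, ν i (Set.Icc 0 x) = ENNReal.ofReal (F x i)

/-- The M-CLP objective. -/
noncomputable def zPrimal {J : ℕ} (c γ μ : Fin J → ℝ) (T : ℝ) (U : ℝ → Fin J → ℝ)
    (ν : Fin J → Measure ℝ) : ℝ :=
  (∑ j, μ j * U 0 j) + ∑ j, ∫ t in Set.Icc (0:ℝ) T, (γ j + (T - t) * c j) ∂(ν j)

/-- The M-CLP* objective. -/
noncomputable def zDual {K : ℕ} (b β lam : Fin K → ℝ) (T : ℝ) (P : ℝ → Fin K → ℝ)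
    (ν : Fin K → Measure ℝ) : ℝ :=
  (∑ k, lam k * P 0 k) + ∑ k, ∫ s in Set.Icc (0:ℝ) T, (β k + (T - s) * b k) ∂(ν k)

/-- The primal slack `x(t) = β + t·b − A·U(t)` for `0 ≤ t < T`, and
`x(T) = β + T·b + λ − A·U(T)`. -/
noncomputable def xSlack {K J : ℕ} (A : Matrix (Fin K) (Fin J) ℝ) (b β lam : Fin K → ℝ)
    (T : ℝ) (U : ℝ → Fin J → ℝ) (t : ℝ) (k : Fin K) : ℝ :=
  β k + t * b k + (if t < T then 0 else lam k) - A.mulVec (U t) k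

/-- The dual slack `q(s) = Aᵀ·P(s) − γ − s·c` for `0 ≤ s < T`, and
`q(T) = Aᵀ·P(T) − γ − T·c − μ`. -/
noncomputable def qSlack {K J : ℕ} (A : Matrix (Fin K) (Fin J) ℝ) (c γ μ : Fin J → ℝ)
    (T : ℝ) (P : ℝ → Fin K → ℝ) (s : ℝ) (j : Fin J) : ℝ :=
  A.transpose.mulVec (P s) j - γ j - s * c j - (if s < T then 0 else μ j)

open Set

private lemma measure_univ_of_ls' {T : ℝ} {ν : Measure ℝ} (h0 : ν (Icc 0 T)ᶜ = 0) :
    ν univ = ν (Icc 0 T) := by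
  refine le_antisymm ?_ (measure_mono (subset_univ _))
  calc ν univ = ν (Icc 0 T ∪ (Icc 0 T)ᶜ) := by rw [union_compl_self]
    _ ≤ ν (Icc 0 T) + ν (Icc 0 T)ᶜ := measure_union_le _ _
    _ = ν (Icc 0 T) := by rw [h0, add_zero]

private lemma measure_Iic_of_ls' {T : ℝ} {ν : Measure ℝ} (h0 : ν (Icc 0 T)ᶜ = 0)
    {x : ℝ} (hx0 : 0 ≤ x) :
    ν (Iic x) = ν (Icc 0 x) := by
  refine le_antisymm ?_ (measure_mono Icc_subset_Iic_self)
  calc ν (Iic x) ≤ ν (Icc 0 x ∪ (Icc 0 T)ᶜ) := measure_mono ?_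
    _ ≤ ν (Icc 0 x) + ν (Icc 0 T)ᶜ := measure_union_le _ _
    _ = ν (Icc 0 x) := by rw [h0, add_zero]
  intro y hy
  rcases le_or_gt 0 y with h | h
  · exact Or.inl ⟨h, hy⟩
  · exact Or.inr fun hmem => absurd hmem.1 (not_le.mpr h)


/-- Weak duality between M-CLP and M-CLP*: `z(U) ≤ z*(P)` for every feasible `U`
of M-CLP and feasible `P` of M-CLP*. -/
theorem weak_duality {K J : ℕ}
    (A : Matrix (Fin K) (Fin J) ℝ) (b β lam : Fin K → ℝ) (c γ μ : Fin J → ℝ) (T : ℝ)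
    (hT : 0 < T)
    (U : ℝ → Fin J → ℝ) (P : ℝ → Fin K → ℝ)
    (νU : Fin J → Measure ℝ) (νP : Fin K → Measure ℝ)
    (hU : PrimalFeasible A b β lam T U) (hP : DualFeasible A c γ μ T P)
    (hνU : LSFamily T U νU) (hνP : LSFamily T P νP) :
    zPrimal c γ μ T U νU ≤ zDual b β lam T P νP := by

  obtain ⟨hUmono, -, hU0, hUt, hUT⟩ := hU
  obtain ⟨hPmono, -, hP0, hPs, hPT⟩ := hP
  have hνU0 : ∀ j, νU j (Set.Icc 0 T)ᶜ = 0 := fun j => (hνU j).1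
  have hνUx : ∀ j, ∀ x ∈ Set.Icc (0:ℝ) T, νU j (Set.Icc 0 x) = ENNReal.ofReal (U x j) :=
    fun j => (hνU j).2
  have hνP0 : ∀ k, νP k (Set.Icc 0 T)ᶜ = 0 := fun k => (hνP k).1
  have hνPx : ∀ k, ∀ x ∈ Set.Icc (0:ℝ) T, νP k (Set.Icc 0 x) = ENNReal.ofReal (P x k) :=
    fun k => (hνP k).2
  unfold zPrimal zDual
  classical
  have hUnn : ∀ j, ∀ x ∈ Set.Icc (0:ℝ) T, 0 ≤ U x j := fun j x hx =>
    le_trans (hU0 j) (hUmono j ⟨le_refl 0, hT.le⟩ hx hx.1)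
  have hPnn : ∀ k, ∀ x ∈ Set.Icc (0:ℝ) T, 0 ≤ P x k := fun k x hx =>
    le_trans (hP0 k) (hPmono k ⟨le_refl 0, hT.le⟩ hx hx.1)
  have hTmem : T ∈ Set.Icc (0:ℝ) T := ⟨hT.le, le_refl T⟩
  have instU : ∀ j, IsFiniteMeasure (νU j) := fun j => ⟨by
    rw [measure_univ_of_ls' (hνU0 j), hνUx j T hTmem]; exact ENNReal.ofReal_lt_top⟩
  have instP : ∀ k, IsFiniteMeasure (νP k) := fun k => ⟨by
    rw [measure_univ_of_ls' (hνP0 k), hνPx k T hTmem]; exact ENNReal.ofReal_lt_top⟩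
  -- the measurable set for Fubini
  set M : Set (ℝ × ℝ) := {p : ℝ × ℝ | p.1 + p.2 ≤ T} with hMdef
  have hMmeas : MeasurableSet M :=
    measurableSet_le (measurable_fst.add measurable_snd) measurable_const
  have hpre1 : ∀ t : ℝ, Prod.mk t ⁻¹' M = Set.Iic (T - t) := by
    intro t; ext s
    simp only [hMdef, Set.mem_preimage, Set.mem_setOf_eq, Set.mem_Iic]
    constructor <;> intro h <;> linarith
  have hpre2 : ∀ s : ℝ, (fun t => (t, s)) ⁻¹' M = Set.Iic (T - s) := by
    intro s; ext t
    simp only [hMdef, Set.mem_preimage, Set.mem_setOf_eq, Set.mem_Iic]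
    constructor <;> intro h <;> linarith
  -- slice functions
  set f : Fin K → ℝ → ℝ := fun k t => ((νP k) (Set.Iic (T - t))).toReal with hfdef
  set e : Fin J → ℝ → ℝ := fun j s => ((νU j) (Set.Iic (T - s))).toReal with hedef
  have hfmeas : ∀ k, Measurable (f k) := by
    intro k
    haveI := instP k
    have : f k = fun t => ((νP k) (Prod.mk t ⁻¹' M)).toReal := by
      funext t; rw [hpre1]
    rw [this]
    exact (measurable_measure_prodMk_left hMmeas).ennreal_toReal
  have hemeas : ∀ j, Measurable (e j) := by
    intro j
    haveI := instU j
    have : e j = fun t => ((νU j) (Prod.mk t ⁻¹' M)).toReal := by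
      funext t; rw [hpre1]
    rw [this]
    exact (measurable_measure_prodMk_left hMmeas).ennreal_toReal
  have hfval : ∀ k, ∀ t ∈ Set.Icc (0:ℝ) T, f k t = P (T - t) k := by
    intro k t ht
    have hTt : T - t ∈ Set.Icc (0:ℝ) T := ⟨by linarith [ht.2], by linarith [ht.1]⟩
    rw [hfdef]
    simp only
    rw [measure_Iic_of_ls' (hνP0 k) hTt.1, hνPx k _ hTt,
      ENNReal.toReal_ofReal (hPnn k _ hTt)]
  have heval : ∀ j, ∀ s ∈ Set.Icc (0:ℝ) T, e j s = U (T - s) j := by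
    intro j s hs
    have hTs : T - s ∈ Set.Icc (0:ℝ) T := ⟨by linarith [hs.2], by linarith [hs.1]⟩
    rw [hedef]
    simp only
    rw [measure_Iic_of_ls' (hνU0 j) hTs.1, hνUx j _ hTs,
      ENNReal.toReal_ofReal (hUnn j _ hTs)]
  have hfint : ∀ j k, Integrable (f k) (νU j) := by
    intro j k
    haveI := instU j; haveI := instP k
    refine Integrable.mono' (integrable_const ((νP k univ).toReal))
      (hfmeas k).aestronglyMeasurable (ae_of_all _ fun t => ?_)
    rw [Real.norm_eq_abs, abs_of_nonneg ENNReal.toReal_nonneg]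
    exact ENNReal.toReal_mono (measure_ne_top _ _) (measure_mono (subset_univ _))
  have heint : ∀ k j, Integrable (e j) (νP k) := by
    intro k j
    haveI := instU j; haveI := instP k
    refine Integrable.mono' (integrable_const ((νU j univ).toReal))
      (hemeas j).aestronglyMeasurable (ae_of_all _ fun t => ?_)
    rw [Real.norm_eq_abs, abs_of_nonneg ENNReal.toReal_nonneg]
    exact ENNReal.toReal_mono (measure_ne_top _ _) (measure_mono (subset_univ _))
  -- restriction facts
  have haeU : ∀ j, ∀ᵐ t ∂(νU j), t ∈ Set.Icc (0:ℝ) T := by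
    intro j; rw [ae_iff]
    simpa [Set.compl_def] using hνU0 j
  have haeP : ∀ k, ∀ᵐ s ∂(νP k), s ∈ Set.Icc (0:ℝ) T := by
    intro k; rw [ae_iff]
    simpa [Set.compl_def] using hνP0 k
  have hrestU : ∀ j, (νU j).restrict (Set.Icc 0 T) = νU j := fun j =>
    Measure.restrict_eq_self_of_ae_mem (haeU j)
  have hrestP : ∀ k, (νP k).restrict (Set.Icc 0 T) = νP k := fun k =>
    Measure.restrict_eq_self_of_ae_mem (haeP k)
  -- Fubini core
  have hcore : ∀ j k, ∫ t, f k t ∂(νU j) = ∫ s, e j s ∂(νP k) := by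
    intro j k
    haveI := instU j; haveI := instP k
    have h1 : ∫ t, f k t ∂(νU j) = (∫⁻ t, νP k (Set.Iic (T - t)) ∂(νU j)).toReal := by
      rw [integral_eq_lintegral_of_nonneg_ae (ae_of_all _ fun t => ENNReal.toReal_nonneg)
        (hfmeas k).aestronglyMeasurable]
      congr 1
      exact lintegral_congr fun t => ENNReal.ofReal_toReal (measure_ne_top _ _)
    have h2 : ∫ s, e j s ∂(νP k) = (∫⁻ s, νU j (Set.Iic (T - s)) ∂(νP k)).toReal := by
      rw [integral_eq_lintegral_of_nonneg_ae (ae_of_all _ fun s => ENNReal.toReal_nonneg)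
        (hemeas j).aestronglyMeasurable]
      congr 1
      exact lintegral_congr fun s => ENNReal.ofReal_toReal (measure_ne_top _ _)
    rw [h1, h2]
    congr 1
    calc ∫⁻ t, νP k (Set.Iic (T - t)) ∂(νU j)
        = ∫⁻ t, νP k (Prod.mk t ⁻¹' M) ∂(νU j) := by
          refine lintegral_congr fun t => ?_; rw [hpre1]
      _ = ((νU j).prod (νP k)) M := (Measure.prod_apply hMmeas).symm
      _ = ∫⁻ s, νU j ((fun t => (t, s)) ⁻¹' M) ∂(νP k) := Measure.prod_apply_symm hMmeas
      _ = ∫⁻ s, νU j (Set.Iic (T - s)) ∂(νP k) := by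
          refine lintegral_congr fun s => ?_; rw [hpre2]
  -- primal side
  have hprimal : ∀ j, μ j * U 0 j + ∫ t, (γ j + (T - t) * c j) ∂(νU j)
      ≤ ∑ k, A k j * ∫ t, f k t ∂(νU j) := by
    intro j
    haveI := instU j
    have hgmeas : Measurable fun t : ℝ => γ j + (T - t) * c j :=
      measurable_const.add ((measurable_const.sub measurable_id).mul measurable_const)
    have hgint : Integrable (fun t => γ j + (T - t) * c j) (νU j) := by
      refine Integrable.mono' (integrable_const (|γ j| + T * |c j|))
        hgmeas.aestronglyMeasurable ?_
      filter_upwards [haeU j] with t ht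
      rw [Real.norm_eq_abs]
      calc |γ j + (T - t) * c j| ≤ |γ j| + |(T - t) * c j| := abs_add_le _ _
        _ = |γ j| + |T - t| * |c j| := by rw [abs_mul]
        _ ≤ |γ j| + T * |c j| := by
            have h1 : |T - t| ≤ T := by
              rw [abs_of_nonneg (by linarith [ht.2])]; linarith [ht.1]
            nlinarith [abs_nonneg (c j)]
    have hindint : Integrable (Set.indicator {(0:ℝ)} fun _ => μ j) (νU j) :=
      (integrable_const (μ j)).indicator (measurableSet_singleton 0)
    have hGint : Integrable (fun t => ∑ k, A k j * f k t) (νU j) :=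
      integrable_finset_sum _ fun k _ => (hfint j k).const_mul _
    have hind : ∫ t, Set.indicator {(0:ℝ)} (fun _ => μ j) t ∂(νU j) = μ j * U 0 j := by
      rw [integral_indicator_const _ (measurableSet_singleton 0)]
      have h00 : νU j {0} = ENNReal.ofReal (U 0 j) := by
        have := hνUx j 0 ⟨le_refl 0, hT.le⟩
        simpa [Set.Icc_self] using this
      rw [measureReal_def, h00, ENNReal.toReal_ofReal (hU0 j), smul_eq_mul, mul_comm]
    have hle : ∀ᵐ t ∂(νU j), γ j + (T - t) * c j + Set.indicator {(0:ℝ)} (fun _ => μ j) t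
        ≤ ∑ k, A k j * f k t := by
      filter_upwards [haeU j] with t ht
      have hTt : T - t ∈ Set.Icc (0:ℝ) T := ⟨by linarith [ht.2], by linarith [ht.1]⟩
      have hsum : ∑ k, A k j * f k t = A.transpose.mulVec (P (T - t)) j := by
        simp only [Matrix.mulVec, dotProduct, Matrix.transpose_apply]
        exact Finset.sum_congr rfl fun k _ => by rw [hfval k t ht]
      rw [hsum]
      by_cases h0 : t = 0
      · subst h0
        rw [Set.indicator_of_mem (Set.mem_singleton 0)]
        have := hPT j
        simp only [sub_zero]
        linarith
      · rw [Set.indicator_of_notMem (by simpa using h0), add_zero]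
        have ht0 : 0 < t := lt_of_le_of_ne ht.1 (Ne.symm h0)
        exact hPs (T - t) ⟨hTt.1, by linarith⟩ j
    calc μ j * U 0 j + ∫ t, (γ j + (T - t) * c j) ∂(νU j)
        = ∫ t, (γ j + (T - t) * c j + Set.indicator {(0:ℝ)} (fun _ => μ j) t) ∂(νU j) := by
          rw [integral_add hgint hindint, hind]; ring
      _ ≤ ∫ t, ∑ k, A k j * f k t ∂(νU j) := integral_mono_ae (hgint.add hindint) hGint hle
      _ = ∑ k, A k j * ∫ t, f k t ∂(νU j) := by
          rw [integral_finset_sum _ fun k _ => (hfint j k).const_mul _]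
          exact Finset.sum_congr rfl fun k _ => integral_const_mul _ _
  -- dual side
  have hdual : ∀ k, ∑ j, A k j * ∫ s, e j s ∂(νP k)
      ≤ lam k * P 0 k + ∫ s, (β k + (T - s) * b k) ∂(νP k) := by
    intro k
    haveI := instP k
    have hgmeas : Measurable fun s : ℝ => β k + (T - s) * b k :=
      measurable_const.add ((measurable_const.sub measurable_id).mul measurable_const)
    have hgint : Integrable (fun s => β k + (T - s) * b k) (νP k) := by
      refine Integrable.mono' (integrable_const (|β k| + T * |b k|))
        hgmeas.aestronglyMeasurable ?_
      filter_upwards [haeP k] with s hs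
      rw [Real.norm_eq_abs]
      calc |β k + (T - s) * b k| ≤ |β k| + |(T - s) * b k| := abs_add_le _ _
        _ = |β k| + |T - s| * |b k| := by rw [abs_mul]
        _ ≤ |β k| + T * |b k| := by
            have h1 : |T - s| ≤ T := by
              rw [abs_of_nonneg (by linarith [hs.2])]; linarith [hs.1]
            nlinarith [abs_nonneg (b k)]
    have hindint : Integrable (Set.indicator {(0:ℝ)} fun _ => lam k) (νP k) :=
      (integrable_const (lam k)).indicator (measurableSet_singleton 0)
    have hHint : Integrable (fun s => ∑ j, A k j * e j s) (νP k) :=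
      integrable_finset_sum _ fun j _ => (heint k j).const_mul _
    have hind : ∫ s, Set.indicator {(0:ℝ)} (fun _ => lam k) s ∂(νP k) = lam k * P 0 k := by
      rw [integral_indicator_const _ (measurableSet_singleton 0)]
      have h00 : νP k {0} = ENNReal.ofReal (P 0 k) := by
        have := hνPx k 0 ⟨le_refl 0, hT.le⟩
        simpa [Set.Icc_self] using this
      rw [measureReal_def, h00, ENNReal.toReal_ofReal (hP0 k), smul_eq_mul, mul_comm]
    have hle : ∀ᵐ s ∂(νP k), ∑ j, A k j * e j s
        ≤ β k + (T - s) * b k + Set.indicator {(0:ℝ)} (fun _ => lam k) s := by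
      filter_upwards [haeP k] with s hs
      have hTs : T - s ∈ Set.Icc (0:ℝ) T := ⟨by linarith [hs.2], by linarith [hs.1]⟩
      have hsum : ∑ j, A k j * e j s = A.mulVec (U (T - s)) k := by
        simp only [Matrix.mulVec, dotProduct]
        exact Finset.sum_congr rfl fun j _ => by rw [heval j s hs]
      rw [hsum]
      by_cases h0 : s = 0
      · subst h0
        rw [Set.indicator_of_mem (Set.mem_singleton 0)]
        have := hUT k
        simp only [sub_zero]
        linarith
      · rw [Set.indicator_of_notMem (by simpa using h0), add_zero]
        have hs0 : 0 < s := lt_of_le_of_ne hs.1 (Ne.symm h0)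
        exact hUt (T - s) ⟨hTs.1, by linarith⟩ k
    calc ∑ j, A k j * ∫ s, e j s ∂(νP k)
        = ∫ s, ∑ j, A k j * e j s ∂(νP k) := by
          rw [integral_finset_sum _ fun j _ => (heint k j).const_mul _]
          exact (Finset.sum_congr rfl fun j _ => (integral_const_mul _ _).symm)
      _ ≤ ∫ s, (β k + (T - s) * b k + Set.indicator {(0:ℝ)} (fun _ => lam k) s) ∂(νP k) :=
          integral_mono_ae hHint (hgint.add hindint) hle
      _ = lam k * P 0 k + ∫ s, (β k + (T - s) * b k) ∂(νP k) := by
          rw [integral_add hgint hindint, hind]; ring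
  -- assemble
  simp only [hrestU, hrestP]
  calc (∑ j, μ j * U 0 j) + ∑ j, ∫ t, (γ j + (T - t) * c j) ∂(νU j)
      = ∑ j, (μ j * U 0 j + ∫ t, (γ j + (T - t) * c j) ∂(νU j)) := by
        rw [Finset.sum_add_distrib]
    _ ≤ ∑ j, ∑ k, A k j * ∫ t, f k t ∂(νU j) := Finset.sum_le_sum fun j _ => hprimal j
    _ = ∑ k, ∑ j, A k j * ∫ s, e j s ∂(νP k) := by
        rw [Finset.sum_comm]
        exact Finset.sum_congr rfl fun k _ => Finset.sum_congr rfl fun j _ => by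
          rw [hcore j k]
    _ ≤ ∑ k, (lam k * P 0 k + ∫ s, (β k + (T - s) * b k) ∂(νP k)) :=
        Finset.sum_le_sum fun k _ => hdual k
    _ = (∑ k, lam k * P 0 k) + ∑ k, ∫ s, (β k + (T - s) * b k) ∂(νP k) := by
        rw [Finset.sum_add_distrib]
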